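/- arXiv:2603.03141 — 3 statements merged into one kernel-verified Lean document; each statement's English description precedes it below -/
import Mathlib

section
/- Let σ be a well-formed trace and let e1, e2 ∈ E_σ be conflicting events with e1 strictly before e2 in σ. Then (e1, e2) is a sync-preserving race in σ if and only if SPIdealσ(e1, e2) contains neither e1 nor e2. -/
/-!
Events, traces, and predictive data races.

An event datum is a pair of a thread identifier and an operation
(read/write of a memory location, or acquire/release of a lock).
Following the convention that events of a trace are identified with
positions (hence pairwise distinct), a trace is modeled as a
duplicate-free list of event *identifiers* (natural numbers), listed
in trace order, together with a global data assignment
`ev : ℕ → EventData` giving the thread and operation of each event.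
-/

inductive Op : Type
  | read : ℕ → Op
  | write : ℕ → Op
  | acq : ℕ → Op
  | rel : ℕ → Op
  deriving DecidableEq

structure EventData : Type where
  thread : ℕ
  op : Op
  deriving DecidableEq

abbrev Trace : Type := List ℕ

namespace Race

variable (ev : ℕ → EventData)

/-- Trace order: `e1` occurs no later than `e2` in `σ`. -/
def trord (σ : Trace) (e1 e2 : ℕ) : Prop :=
  e1 ∈ σ ∧ e2 ∈ σ ∧ σ.idxOf e1 ≤ σ.idxOf e2

/-- Thread order: trace order plus equality of threads. -/
def threadOrd (σ : Trace) (e1 e2 : ℕ) : Prop :=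
  trord σ e1 e2 ∧ (ev e1).thread = (ev e2).thread

/-- Lock-semantics check: `h` records, for each lock, the thread currently
holding it.  A lock may be acquired only when free, and released only by
the thread holding it. -/
def lockOk : (ℕ → Option ℕ) → Trace → Prop
  | _, [] => True
  | h, e :: rest =>
    match (ev e).op with
    | Op.acq l => h l = none ∧ lockOk (Function.update h l (some (ev e).thread)) rest
    | Op.rel l => h l = some (ev e).thread ∧ lockOk (Function.update h l none) rest
    | _ => lockOk h rest

/-- A well-formed trace: pairwise distinct events respecting lock semantics. -/
def WellFormed (σ : Trace) : Prop := σ.Nodup ∧ lockOk ev (fun _ => none) σ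

/-- A well-formed subtrace: a contiguous subtrace of some well-formed trace. -/
def WellFormedSub (σ : Trace) : Prop :=
  ∃ pre suf : Trace, WellFormed ev (pre ++ σ ++ suf)

/-- Happens-before: the smallest partial order on the events of `σ` containing
thread order and ordering each release before every later acquire of the
same lock. -/
inductive HB (σ : Trace) : ℕ → ℕ → Prop
  | thread_order {e1 e2 : ℕ} : threadOrd ev σ e1 e2 → HB σ e1 e2
  | rel_acq {e1 e2 l : ℕ} :
      trord σ e1 e2 → (ev e1).op = Op.rel l → (ev e2).op = Op.acq l → HB σ e1 e2
  | trans {e1 e2 e3 : ℕ} : HB σ e1 e2 → HB σ e2 e3 → HB σ e1 e3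

def isWrite (o : Op) : Prop := ∃ x, o = Op.write x

/-- The memory location accessed by an operation, if any. -/
def loc : Op → Option ℕ
  | Op.read x => some x
  | Op.write x => some x
  | _ => none

/-- Conflicting events: same location, different threads, at least one write. -/
def Conflicting (e1 e2 : ℕ) : Prop :=
  (ev e1).thread ≠ (ev e2).thread ∧
  (∃ x, loc (ev e1).op = some x ∧ loc (ev e2).op = some x) ∧
  (isWrite (ev e1).op ∨ isWrite (ev e2).op)

/-- An HB race: a conflicting pair of events of `σ`, unordered by happens-before. -/
def HBRace (σ : Trace) (e1 e2 : ℕ) : Prop :=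
  e1 ∈ σ ∧ e2 ∈ σ ∧ Conflicting ev e1 e2 ∧ ¬ HB ev σ e1 e2 ∧ ¬ HB ev σ e2 e1

/-- `lw σ e`: the last write (to the location read by `e`) before `e` in `σ`. -/
def lw (σ : Trace) (e : ℕ) : Option ℕ :=
  match (ev e).op with
  | Op.read x =>
      ((σ.take (σ.idxOf e)).filter fun f => decide ((ev f).op = Op.write x)).getLast?
  | _ => none

/-- The matching release of an acquire: the first release of the same lock after it. -/
def matchRel (σ : Trace) (a : ℕ) : Option ℕ :=
  match (ev a).op with
  | Op.acq l =>
      ((σ.drop (σ.idxOf a + 1)).filter fun f => decide ((ev f).op = Op.rel l)).head?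
  | _ => none

/-- The matching acquire of a release: the last acquire of the same lock before it. -/
def matchAcq (σ : Trace) (r : ℕ) : Option ℕ :=
  match (ev r).op with
  | Op.rel l =>
      ((σ.take (σ.idxOf r)).filter fun f => decide ((ev f).op = Op.acq l)).getLast?
  | _ => none

/-- The last event of the same thread before `e` in `σ`. -/
def prevE (σ : Trace) (e : ℕ) : Option ℕ :=
  ((σ.take (σ.idxOf e)).filter fun f => decide ((ev f).thread = (ev e).thread)).getLast?

/-- `ρ` is a correct reordering of `σ`. -/
structure CorrectReordering (σ ρ : Trace) : Prop where
  wf : WellFormed ev ρ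
  subset : ∀ e ∈ ρ, e ∈ σ
  to_closed : ∀ e1 e2 : ℕ, threadOrd ev σ e1 e2 → e2 ∈ ρ → e1 ∈ ρ ∧ threadOrd ev ρ e1 e2
  lw_eq : ∀ e ∈ ρ, (∃ x, (ev e).op = Op.read x) → lw ev ρ e = lw ev σ e

/-- `e` is enabled in the correct reordering `ρ` of `σ`. -/
def Enabled (σ ρ : Trace) (e : ℕ) : Prop :=
  e ∈ σ ∧ e ∉ ρ ∧ ∀ f : ℕ, threadOrd ev σ f e → f ≠ e → f ∈ ρ

/-- A reordering is sync-preserving if acquires of a common lock keep their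
relative order from `σ`. -/
def SyncPres (σ ρ : Trace) : Prop :=
  ∀ a1 a2 l : ℕ, a1 ∈ ρ → a2 ∈ ρ → (ev a1).op = Op.acq l → (ev a2).op = Op.acq l →
    (trord ρ a1 a2 ↔ trord σ a1 a2)

/-- A sync-preserving race. -/
def SyncPresRace (σ : Trace) (e1 e2 : ℕ) : Prop :=
  e1 ∈ σ ∧ e2 ∈ σ ∧ Conflicting ev e1 e2 ∧
  ∃ ρ : Trace, CorrectReordering ev σ ρ ∧ SyncPres ev σ ρ ∧
    Enabled ev σ ρ e1 ∧ Enabled ev σ ρ e2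

/-- A predictive race. -/
def PredictiveRace (σ : Trace) (e1 e2 : ℕ) : Prop :=
  e1 ∈ σ ∧ e2 ∈ σ ∧ Conflicting ev e1 e2 ∧
  ∃ ρ : Trace, CorrectReordering ev σ ρ ∧ Enabled ev σ ρ e1 ∧ Enabled ev σ ρ e2

/-- A subset of the events of `σ`, downward closed under thread order and
closed under last-writes. -/
def TLClosed (σ : Trace) (S : Set ℕ) : Prop :=
  (∀ e ∈ S, e ∈ σ) ∧
  (∀ e1 e2 : ℕ, threadOrd ev σ e1 e2 → e2 ∈ S → e1 ∈ S) ∧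
  (∀ e ∈ S, ∀ f : ℕ, lw ev σ e = some f → f ∈ S)

/-- The smallest TL-closed set containing `S`. -/
def TLClosure (σ : Trace) (S : Set ℕ) : Set ℕ :=
  ⋂₀ {C : Set ℕ | TLClosed ev σ C ∧ S ⊆ C}

/-- Sync-preserving closed sets. -/
def SPClosed (σ : Trace) (S : Set ℕ) : Prop :=
  TLClosed ev σ S ∧
  ∀ a1 a2 l : ℕ, a1 ∈ S → a2 ∈ S → (ev a1).op = Op.acq l → (ev a2).op = Op.acq l →
    trord σ a1 a2 → a1 ≠ a2 → ∀ r : ℕ, matchRel ev σ a1 = some r → r ∈ S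

/-- The smallest sync-preserving closed set containing `S`. -/
def SPClosure (σ : Trace) (S : Set ℕ) : Set ℕ :=
  ⋂₀ {C : Set ℕ | SPClosed ev σ C ∧ S ⊆ C}

/-- `SPIdeal σ e1 e2 = SPClosure σ ({prev σ e1, prev σ e2} \ {⊥})`. -/
def SPIdeal (σ : Trace) (e1 e2 : ℕ) : Set ℕ :=
  SPClosure ev σ {f : ℕ | prevE ev σ e1 = some f ∨ prevE ev σ e2 = some f}

/-- Local time: the number of events strictly below `e` in thread order. -/
def ltime (σ : Trace) (e : ℕ) : ℕ :=
  ((σ.take (σ.idxOf e)).filter fun f => decide ((ev f).thread = (ev e).thread)).length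

/-- Causal timestamp: for each thread `t`, the maximum local time of an
event of thread `t` happening before `e` (and `-1` if there is none). -/
noncomputable def ctime (σ : Trace) (e : ℕ) (t : ℕ) : ℤ :=
  sSup (insert (-1)
    {n : ℤ | ∃ f ∈ σ, (ev f).thread = t ∧ HB ev σ f e ∧ n = (ltime ev σ f : ℤ)})

end Race


/-! ## Auxiliary development -/

open List
set_option linter.unusedSectionVars false

section ListLemmas
variable {α : Type*} [DecidableEq α]

theorem mem_take_iff_nodup {L : List α} (hn : L.Nodup) {f : α} {n : ℕ} :
    f ∈ L.take n ↔ f ∈ L ∧ L.idxOf f < n := by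
  constructor
  · intro h
    obtain ⟨i, hi, hif⟩ := List.getElem_of_mem h
    have hin : i < n := lt_of_lt_of_le hi (by simp [List.length_take])
    have hlen : i < L.length := by
      have := List.length_take (i := n) (l := L); omega
    have hgi : L[i] = f := by rw [← List.getElem_take (xs := L) (h := hi)]; exact hif
    have hmem : f ∈ L := hgi ▸ List.getElem_mem hlen
    have hidx : L.idxOf f = i := by rw [← hgi]; exact List.Nodup.idxOf_getElem hn i hlen
    exact ⟨hmem, by omega⟩
  · rintro ⟨hm, hlt⟩
    have hlen : L.idxOf f < L.length := List.idxOf_lt_length_iff.2 hm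
    have hb : L.idxOf f < (L.take n).length := by simp [List.length_take]; omega
    have : (L.take n)[L.idxOf f] = f := by
      rw [List.getElem_take]; exact List.getElem_idxOf hlen
    exact this ▸ List.getElem_mem hb

theorem mem_drop_iff_nodup {L : List α} (hn : L.Nodup) {f : α} {n : ℕ} :
    f ∈ L.drop n ↔ f ∈ L ∧ n ≤ L.idxOf f := by
  constructor
  · intro h
    obtain ⟨i, hi, hif⟩ := List.getElem_of_mem h
    rw [List.getElem_drop] at hif
    have hlen : n + i < L.length := by
      have := List.length_drop (i := n) (l := L); omega
    have hmem : f ∈ L := hif ▸ List.getElem_mem hlen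
    have hidx : L.idxOf f = n + i := by rw [← hif]; exact List.Nodup.idxOf_getElem hn _ hlen
    exact ⟨hmem, by omega⟩
  · rintro ⟨hm, hle⟩
    have hlen : L.idxOf f < L.length := List.idxOf_lt_length_iff.2 hm
    have hb : L.idxOf f - n < (L.drop n).length := by simp [List.length_drop]; omega
    have : (L.drop n)[L.idxOf f - n] = f := by
      rw [List.getElem_drop]
      simp only [Nat.add_sub_cancel' hle]
      exact List.getElem_idxOf hlen
    exact this ▸ List.getElem_mem hb

theorem split_at_indexOf {L : List α} {f : α} (h : f ∈ L) :
    L = L.take (L.idxOf f) ++ f :: L.drop (L.idxOf f + 1) := by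
  have hlen : L.idxOf f < L.length := List.idxOf_lt_length_iff.2 h
  have hd : L.drop (L.idxOf f) = f :: L.drop (L.idxOf f + 1) := by
    rw [List.drop_eq_getElem_cons hlen, List.getElem_idxOf hlen]
  rw [← hd, List.take_append_drop]

theorem indexOf_split {L X Y : List α} {f : α} (hn : L.Nodup) (h : L = X ++ f :: Y) :
    L.idxOf f = X.length := by
  subst h
  have hfx : f ∉ X := fun hx =>
    (List.disjoint_of_nodup_append hn) hx (List.mem_cons_self)
  rw [List.idxOf_append_of_notMem hfx, List.idxOf_cons_self]
  omega

theorem split_unique {L X Y X' Y' : List α} {f : α} (hn : L.Nodup)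
    (h : L = X ++ f :: Y) (h' : L = X' ++ f :: Y') : X = X' ∧ Y = Y' := by
  have h1 : X.length = X'.length := by
    rw [← indexOf_split hn h, ← indexOf_split hn h']
  have := List.append_inj (h.symm.trans h') h1
  exact ⟨this.1, by simpa using this.2⟩

/-- Order preservation: a sublist of a duplicate-free list preserves relative order. -/
theorem sublist_indexOf_lt {ρ σ : List α} (hs : ρ <+ σ) (hn : σ.Nodup) {a b : α}
    (ha : a ∈ ρ) (hb : b ∈ ρ) (hlt : ρ.idxOf a < ρ.idxOf b) :
    σ.idxOf a < σ.idxOf b := by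
  induction hs with
  | slnil => simp at ha
  | @cons ρ' σ' x hs ih =>
    have hn' : σ'.Nodup := hn.of_cons
    have hxn : x ∉ σ' := (List.nodup_cons.1 hn).1
    have hax : x ≠ a := fun h => hxn (h ▸ hs.subset ha)
    have hbx : x ≠ b := fun h => hxn (h ▸ hs.subset hb)
    rw [List.idxOf_cons_ne _ hax, List.idxOf_cons_ne _ hbx]
    exact Nat.succ_lt_succ (ih hn' ha hb hlt)
  | @cons_cons ρ' σ' x hs ih =>
    have hn' : σ'.Nodup := hn.of_cons
    have hxn : x ∉ σ' := (List.nodup_cons.1 hn).1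
    by_cases hax : x = a
    · subst hax
      have hba : b ≠ x := by
        intro h; subst h; omega
      have hbρ : b ∈ ρ' := by
        rcases List.mem_cons.1 hb with h | h
        · exact absurd h hba
        · exact h
      have hbx : x ≠ b := fun h => hba h.symm
      rw [List.idxOf_cons_self, List.idxOf_cons_ne _ hbx]
      omega
    · have hbx : x ≠ b := by
        intro h; subst h
        rw [List.idxOf_cons_self] at hlt; omega
      have haρ : a ∈ ρ' := by
        rcases List.mem_cons.1 ha with h | h
        · exact absurd h.symm hax
        · exact h
      have hbρ : b ∈ ρ' := by
        rcases List.mem_cons.1 hb with h | h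
        · exact absurd h (fun hh => hbx hh.symm)
        · exact h
      rw [List.idxOf_cons_ne _ hax, List.idxOf_cons_ne _ hbx] at hlt
      rw [List.idxOf_cons_ne _ hax, List.idxOf_cons_ne _ hbx]
      exact Nat.succ_lt_succ (ih hn' haρ hbρ (by omega))

theorem sublist_indexOf_lt' {ρ σ : List α} (hs : ρ <+ σ) (hn : σ.Nodup) {a b : α}
    (ha : a ∈ ρ) (hb : b ∈ ρ) (hlt : σ.idxOf a < σ.idxOf b) :
    ρ.idxOf a < ρ.idxOf b := by
  have hab : a ≠ b := by
    intro h; subst h; omega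
  rcases lt_trichotomy (ρ.idxOf a) (ρ.idxOf b) with h | h | h
  · exact h
  · exact absurd ((List.idxOf_inj ha).1 h) hab
  · have := sublist_indexOf_lt hs hn hb ha h; omega

theorem sublist_indexOf_le_iff {ρ σ : List α} (hs : ρ <+ σ) (hn : σ.Nodup) {a b : α}
    (ha : a ∈ ρ) (hb : b ∈ ρ) :
    ρ.idxOf a ≤ ρ.idxOf b ↔ σ.idxOf a ≤ σ.idxOf b := by
  by_cases hab : a = b
  · subst hab; simp
  constructor
  · intro h
    have hlt : ρ.idxOf a < ρ.idxOf b :=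
      lt_of_le_of_ne h (fun hh => hab ((List.idxOf_inj ha).1 hh))
    exact le_of_lt (sublist_indexOf_lt hs hn ha hb hlt)
  · intro h
    have hlt : σ.idxOf a < σ.idxOf b :=
      lt_of_le_of_ne h (fun hh => hab ((List.idxOf_inj (hs.subset ha)).1 hh))
    exact le_of_lt (sublist_indexOf_lt' hs hn ha hb hlt)

theorem head?_filter_and {q p : α → Bool} : ∀ {R : List α} {w : α},
    (R.filter q).head? = some w → p w = true →
    (R.filter (fun x => q x && p x)).head? = some w := by
  intro R
  induction R with
  | nil => intro w h; simp at h
  | cons r R ih =>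
    intro w h hp
    by_cases hq : q r
    · rw [List.filter_cons_of_pos hq] at h
      simp only [List.head?_cons, Option.some_inj] at h
      subst h
      rw [List.filter_cons_of_pos (by simp [hq, hp]), List.head?_cons]
    · rw [List.filter_cons_of_neg (by simpa using hq)] at h
      rw [List.filter_cons_of_neg (by simp [hq])]
      exact ih h hp

theorem getLast?_filter_and {q p : α → Bool} {T : List α} {w : α}
    (h : (T.filter q).getLast? = some w) (hp : p w = true) :
    (T.filter (fun x => q x && p x)).getLast? = some w := by
  rw [List.getLast?_eq_head?_reverse, ← List.filter_reverse] at h ⊢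
  exact head?_filter_and h hp

theorem mem_of_getLast?_eq_some' {L : List α} {w : α} (h : L.getLast? = some w) : w ∈ L := by
  rw [List.getLast?_eq_head?_reverse] at h
  obtain ⟨ys, hy⟩ := List.head?_eq_some_iff.1 h
  have : w ∈ L.reverse := by rw [hy]; exact List.mem_cons_self
  exact List.mem_reverse.1 this

end ListLemmas

section ListLemmas2
variable {α : Type*} [DecidableEq α]

theorem drop_of_split {L X Y : List α} {a : α} (hn : L.Nodup) (h : L = X ++ a :: Y) :
    L.drop (L.idxOf a + 1) = Y := by
  rw [indexOf_split hn h, h]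
  have : X ++ a :: Y = (X ++ [a]) ++ Y := by simp
  rw [this]
  exact List.drop_left' (by simp)

theorem indexOf_succ_of_split {L X Y : List α} {a b : α} (hn : L.Nodup)
    (h : L = X ++ a :: b :: Y) : L.idxOf b = L.idxOf a + 1 := by
  have h' : L = (X ++ [a]) ++ b :: Y := by rw [h]; simp
  rw [indexOf_split hn h, indexOf_split hn h']
  simp

theorem indexOf_lt_of_mem_tail {L X Y : List α} {a c : α} (hn : L.Nodup)
    (h : L = X ++ a :: Y) (hc : c ∈ Y) : L.idxOf a < L.idxOf c := by
  have hd : L.drop (L.idxOf a + 1) = Y := drop_of_split hn h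
  have := (mem_drop_iff_nodup hn).1 (hd ▸ hc)
  omega

theorem getLast?_eq_some' {L : List α} {w : α} (h : L.getLast? = some w) :
    ∃ M, L = M ++ [w] := by
  rw [List.getLast?_eq_head?_reverse] at h
  obtain ⟨ys, hy⟩ := List.head?_eq_some_iff.1 h
  refine ⟨ys.reverse, ?_⟩
  have := congrArg List.reverse hy
  simpa using this

end ListLemmas2

namespace Race
open List
set_option linter.unusedSectionVars false

variable (ev : ℕ → EventData)

/-- Does event `e` operate (acquire or release) on lock `l`? -/
def onLock (l : ℕ) (e : ℕ) : Bool :=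
  match (ev e).op with
  | Op.acq l' => l' = l
  | Op.rel l' => l' = l
  | _ => false

theorem onLock_iff {l e : ℕ} :
    onLock ev l e = true ↔ (ev e).op = Op.acq l ∨ (ev e).op = Op.rel l := by
  unfold onLock
  rcases h : (ev e).op with x | x | x | x <;> simp [h]

/-- Per-lock version of `lockOk`. -/
def lockOkL (l : ℕ) : Option ℕ → Trace → Prop
  | _, [] => True
  | s, e :: rest =>
    match (ev e).op with
    | Op.acq l' =>
        if l' = l then s = none ∧ lockOkL l (some (ev e).thread) rest else lockOkL l s rest
    | Op.rel l' =>
        if l' = l then s = some (ev e).thread ∧ lockOkL l none rest else lockOkL l s rest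
    | _ => lockOkL l s rest

theorem lockOk_iff_forall {τ : Trace} : ∀ {h : ℕ → Option ℕ},
    lockOk ev h τ ↔ ∀ l, lockOkL ev l (h l) τ := by
  induction τ with
  | nil => intro h; simp [lockOk, lockOkL]
  | cons e rest ih =>
    intro h
    rcases hop : (ev e).op with x | x | x | x
    · simp only [lockOk, lockOkL, hop]; exact ih.trans (by rfl)
    · simp only [lockOk, lockOkL, hop]; exact ih.trans (by rfl)
    · -- acq
      simp only [lockOk, lockOkL, hop]
      constructor
      · rintro ⟨h0, hrest⟩ l
        by_cases hx : x = l
        · subst hx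
          simp only [if_pos rfl]
          exact ⟨h0, by simpa [Function.update] using (ih.1 hrest) x⟩
        · simp only [if_neg hx]
          have := (ih.1 hrest) l
          rwa [Function.update_of_ne (Ne.symm hx)] at this
      · intro hall
        have h0 : h x = none := by
          have := hall x; simp only [if_pos rfl] at this; exact this.1
        refine ⟨h0, ih.2 ?_⟩
        intro l
        by_cases hx : x = l
        · subst hx
          have := hall x; simp only [if_pos rfl] at this
          simpa [Function.update] using this.2
        · have := hall l; simp only [if_neg hx] at this
          rwa [Function.update_of_ne (Ne.symm hx)]
    · -- rel
      simp only [lockOk, lockOkL, hop]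
      constructor
      · rintro ⟨h0, hrest⟩ l
        by_cases hx : x = l
        · subst hx
          simp only [if_pos rfl]
          exact ⟨h0, by simpa [Function.update] using (ih.1 hrest) x⟩
        · simp only [if_neg hx]
          have := (ih.1 hrest) l
          rwa [Function.update_of_ne (Ne.symm hx)] at this
      · intro hall
        have h0 : h x = some (ev e).thread := by
          have := hall x; simp only [if_pos rfl] at this; exact this.1
        refine ⟨h0, ih.2 ?_⟩
        intro l
        by_cases hx : x = l
        · subst hx
          have := hall x; simp only [if_pos rfl] at this
          simpa [Function.update] using this.2
        · have := hall l; simp only [if_neg hx] at this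
          rwa [Function.update_of_ne (Ne.symm hx)]

theorem lockOkL_filter {l : ℕ} {τ : Trace} : ∀ {s : Option ℕ},
    lockOkL ev l s τ ↔ lockOkL ev l s (τ.filter (onLock ev l)) := by
  induction τ with
  | nil => intro s; simp
  | cons e rest ih =>
    intro s
    rcases hop : (ev e).op with x | x | x | x
    · rw [List.filter_cons_of_neg (by simp [onLock, hop])]
      simp only [lockOkL, hop]; exact ih
    · rw [List.filter_cons_of_neg (by simp [onLock, hop])]
      simp only [lockOkL, hop]; exact ih
    · by_cases hx : x = l
      · subst hx
        rw [List.filter_cons_of_pos (by simp [onLock, hop])]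
        simp only [lockOkL, hop, if_pos rfl]
        exact and_congr Iff.rfl ih
      · rw [List.filter_cons_of_neg (by simp [onLock, hop, hx])]
        simp only [lockOkL, hop, if_neg hx]; exact ih
    · by_cases hx : x = l
      · subst hx
        rw [List.filter_cons_of_pos (by simp [onLock, hop])]
        simp only [lockOkL, hop, if_pos rfl]
        exact and_congr Iff.rfl ih
      · rw [List.filter_cons_of_neg (by simp [onLock, hop, hx])]
        simp only [lockOkL, hop, if_neg hx]; exact ih

/-- Alternation structure of the projection of a well-formed trace to one lock. -/
inductive Alt (l : ℕ) : List ℕ → Prop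
  | nil : Alt l []
  | single (a : ℕ) : (ev a).op = Op.acq l → Alt l [a]
  | pair (a r : ℕ) (rest : List ℕ) : (ev a).op = Op.acq l → (ev r).op = Op.rel l →
      (ev r).thread = (ev a).thread → Alt l rest → Alt l (a :: r :: rest)

theorem alt_of_lockOkL {l : ℕ} : ∀ (L : List ℕ),
    (∀ e ∈ L, onLock ev l e = true) → lockOkL ev l none L → Alt ev l L
  | [], _, _ => Alt.nil
  | [a], hmem, hl => by
    rcases (onLock_iff ev).1 (hmem a (List.mem_singleton_self a)) with h | h
    · exact Alt.single a h
    · simp only [lockOkL, h, if_pos rfl] at hl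
      exact absurd hl.1 (by simp)
  | a :: b :: rest, hmem, hl => by
    rcases (onLock_iff ev).1 (hmem a (by simp)) with ha | ha
    case inr =>
      simp only [lockOkL, ha, if_pos rfl] at hl
      exact absurd hl.1 (by simp)
    rcases (onLock_iff ev).1 (hmem b (by simp)) with hb | hb
    case inl =>
      simp only [lockOkL, ha, hb, if_pos rfl] at hl
      exact absurd hl.2.1 (by simp)
    simp only [lockOkL, ha, hb, if_pos rfl] at hl
    obtain ⟨-, hth, hrest⟩ := hl
    exact Alt.pair a b rest ha hb (by injection hth.symm) 
      (alt_of_lockOkL rest (fun e he => hmem e (by simp [he])) hrest)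

theorem lockOkL_of_alt {l : ℕ} {L : List ℕ} (h : Alt ev l L) : lockOkL ev l none L := by
  induction h with
  | nil => trivial
  | single a ha => simp [lockOkL, ha]
  | pair a r rest ha hr hth _ ih => simp [lockOkL, ha, hr, hth, ih]

theorem alt_mem {l : ℕ} {L : List ℕ} (h : Alt ev l L) {e : ℕ} (he : e ∈ L) :
    (ev e).op = Op.acq l ∨ (ev e).op = Op.rel l := by
  induction h with
  | nil => simp at he
  | single a ha => rw [List.mem_singleton.1 he]; exact Or.inl ha
  | pair a r rest ha hr hth _ ih =>
    rcases List.mem_cons.1 he with rfl | he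
    · exact Or.inl ha
    rcases List.mem_cons.1 he with rfl | he
    · exact Or.inr hr
    · exact ih he

/-- In an `Alt` list, the element following an acquire is its matching release. -/
theorem alt_pair_after_acq {l : ℕ} {L : List ℕ} (h : Alt ev l L) :
    ∀ X Y (a : ℕ), L = X ++ a :: Y → (ev a).op = Op.acq l → Y ≠ [] →
    ∃ r Y', Y = r :: Y' ∧ (ev r).op = Op.rel l ∧ (ev r).thread = (ev a).thread := by
  induction h with
  | nil =>
    intro X Y a hL
    exact absurd hL (by simp)
  | single a0 ha0 =>
    intro X Y a hL ha hY
    rcases X with _ | ⟨x, X⟩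
    · simp at hL
      exact absurd hL.2 hY
    · simp only [List.cons_append, List.cons.injEq] at hL
      exact absurd (List.append_eq_nil_iff.1 hL.2.symm).2 (by simp)
  | pair a0 r0 rest ha0 hr0 hth0 halt ih =>
    intro X Y a hL ha hY
    rcases X with _ | ⟨x, X⟩
    · simp only [List.nil_append, List.cons.injEq] at hL
      obtain ⟨rfl, rfl⟩ := hL
      exact ⟨r0, rest, rfl, hr0, hth0⟩
    rcases X with _ | ⟨x', X⟩
    · simp only [List.cons_append, List.nil_append, List.cons.injEq] at hL
      obtain ⟨rfl, rfl, rfl⟩ := hL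
      rw [ha] at hr0; simp at hr0
    · simp only [List.cons_append, List.cons.injEq] at hL
      obtain ⟨rfl, rfl, hL⟩ := hL
      exact ih X Y a hL ha hY

/-- In an `Alt` list, every release is preceded by its matching acquire. -/
theorem alt_acq_before_rel {l : ℕ} {L : List ℕ} (h : Alt ev l L) :
    ∀ r ∈ L, (ev r).op = Op.rel l →
    ∃ X Y a, L = X ++ a :: r :: Y ∧ (ev a).op = Op.acq l ∧ (ev r).thread = (ev a).thread := by
  induction h with
  | nil => intro r hr; simp at hr
  | single a0 ha0 =>
    intro r hr hrel
    rw [List.mem_singleton.1 hr, ha0] at hrel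
    exact absurd hrel (by simp)
  | pair a0 r0 rest ha0 hr0 hth0 halt ih =>
    intro r hr hrel
    rcases List.mem_cons.1 hr with rfl | hr
    · rw [hrel] at ha0; simp at ha0
    rcases List.mem_cons.1 hr with rfl | hr
    · exact ⟨[], rest, a0, rfl, ha0, hth0⟩
    · obtain ⟨X, Y, a, hsplit, ha, hth⟩ := ih r hr hrel
      exact ⟨a0 :: r0 :: X, Y, a, by rw [hsplit]; rfl, ha, hth⟩

/-- Filtering an `Alt` list by a suitably closed predicate yields an `Alt` list. -/
theorem alt_filter {l : ℕ} {L : List ℕ} (h : Alt ev l L) (q : ℕ → Bool)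
    (H1 : ∀ X Y a r, L = X ++ a :: r :: Y → (ev a).op = Op.acq l → (ev r).op = Op.rel l →
      q r = true → q a = true)
    (H2 : ∀ X Y a r, L = X ++ a :: r :: Y → (ev a).op = Op.acq l → (ev r).op = Op.rel l →
      q a = true → (∃ a' ∈ Y, (ev a').op = Op.acq l ∧ q a' = true) → q r = true) :
    Alt ev l (L.filter q) := by
  induction h with
  | nil => exact Alt.nil
  | single a0 ha0 =>
    cases hq : q a0 with
    | true => simpa [List.filter_singleton, hq] using Alt.single a0 ha0
    | false => simpa [List.filter_singleton, hq] using (Alt.nil : Alt ev l [])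
  | pair a0 r0 rest ha0 hr0 hth0 halt ih =>
    have H1' : ∀ X Y a r, rest = X ++ a :: r :: Y → (ev a).op = Op.acq l →
        (ev r).op = Op.rel l → q r = true → q a = true := fun X Y a r hs =>
      H1 (a0 :: r0 :: X) Y a r (by rw [hs]; rfl)
    have H2' : ∀ X Y a r, rest = X ++ a :: r :: Y → (ev a).op = Op.acq l →
        (ev r).op = Op.rel l → q a = true →
        (∃ a' ∈ Y, (ev a').op = Op.acq l ∧ q a' = true) → q r = true := fun X Y a r hs =>
      H2 (a0 :: r0 :: X) Y a r (by rw [hs]; rfl)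
    have ihr := ih H1' H2'
    by_cases hqa : q a0 = true
    · by_cases hqr : q r0 = true
      · rw [List.filter_cons_of_pos hqa, List.filter_cons_of_pos hqr]
        exact Alt.pair a0 r0 _ ha0 hr0 hth0 ihr
      · -- q a0 true, q r0 false: no event of `rest` is selected
        have hrest : rest.filter q = [] := by
          rw [List.filter_eq_nil_iff]
          intro x hx hqx
          -- x is an acquire or a release of l
          rcases alt_mem ev halt hx with hax | hrx
          · exact hqr (H2 [] rest a0 r0 rfl ha0 hr0 hqa ⟨x, hx, hax, hqx⟩)
          · obtain ⟨X, Y, a, hsplit, ha, hth⟩ := alt_acq_before_rel ev halt x hx hrx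
            have hqa' : q a = true := H1' X Y a x hsplit ha hrx hqx
            have haM : a ∈ rest := by rw [hsplit]; simp
            have haacq : (ev a).op = Op.acq l := ha
            exact hqr (H2 [] rest a0 r0 rfl ha0 hr0 hqa ⟨a, haM, haacq, hqa'⟩)
        rw [List.filter_cons_of_pos hqa, List.filter_cons_of_neg (by simp [hqr]), hrest]
        exact Alt.single a0 ha0
    · have hqr : ¬ q r0 = true := fun hr => hqa (H1 [] rest a0 r0 rfl ha0 hr0 hr)
      rw [List.filter_cons_of_neg (by simp [hqa]), List.filter_cons_of_neg (by simp [hqr])]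
      exact ihr


/-! ### Bridging lemmas between positional definitions and list splits -/

theorem lw_char {σ : Trace} {e f : ℕ} (h : lw ev σ e = some f) :
    ∃ x, (ev e).op = Op.read x ∧ (ev f).op = Op.write x ∧ f ∈ σ.take (σ.idxOf e) := by
  unfold lw at h
  rcases hop : (ev e).op with x | x | x | x <;> rw [hop] at h
  · refine ⟨x, rfl, ?_, ?_⟩
    · have := List.mem_filter.1 (mem_of_getLast?_eq_some' h)
      simpa using this.2
    · exact List.mem_of_mem_filter (mem_of_getLast?_eq_some' h)
  · exact absurd h (by simp)
  · exact absurd h (by simp)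
  · exact absurd h (by simp)

theorem matchRel_char {σ : Trace} {a r : ℕ} (h : matchRel ev σ a = some r) :
    ∃ l, (ev a).op = Op.acq l ∧ (ev r).op = Op.rel l ∧ r ∈ σ.drop (σ.idxOf a + 1) := by
  unfold matchRel at h
  rcases hop : (ev a).op with x | x | x | x <;> rw [hop] at h
  case read => exact absurd h (by simp)
  case write => exact absurd h (by simp)
  case rel => exact absurd h (by simp)
  obtain ⟨ys, hys⟩ := List.head?_eq_some_iff.1 h
  have hmem : r ∈ (σ.drop (σ.idxOf a + 1)).filter fun f => decide ((ev f).op = Op.rel x) := by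
    rw [hys]; exact List.mem_cons_self
  have := List.mem_filter.1 hmem
  exact ⟨x, rfl, by simpa using this.2, this.1⟩

theorem prevE_char {σ : Trace} {e p : ℕ} (h : prevE ev σ e = some p) :
    p ∈ σ.take (σ.idxOf e) ∧ (ev p).thread = (ev e).thread := by
  unfold prevE at h
  have hmem := mem_of_getLast?_eq_some' h
  have := List.mem_filter.1 hmem
  exact ⟨this.1, by simpa using this.2⟩

/-- `matchRel` computed from a split of the trace. -/
theorem matchRel_of_split {σ U V : Trace} {a l : ℕ} (hn : σ.Nodup)
    (hσ : σ = U ++ a :: V) (hop : (ev a).op = Op.acq l) :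
    matchRel ev σ a = ((V.filter fun f => decide ((ev f).op = Op.rel l)).head?) := by
  have hidx : σ.idxOf a = U.length := indexOf_split hn hσ
  have hdrop : σ.drop (σ.idxOf a + 1) = V := by
    rw [hidx, hσ]
    have : U ++ a :: V = (U ++ [a]) ++ V := by simp
    rw [this]
    exact List.drop_left' (by simp)
  unfold matchRel
  rw [hop, hdrop]

/-- The projection of the subtrace after `a` onto lock `l`, as part of the
projection of the full trace. -/
theorem proj_split {σ : Trace} {a l : ℕ} (hn : σ.Nodup) (ha : a ∈ σ)
    (honl : onLock ev l a = true) :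
    σ.filter (onLock ev l) =
      ((σ.take (σ.idxOf a)).filter (onLock ev l)) ++ a ::
        ((σ.drop (σ.idxOf a + 1)).filter (onLock ev l)) := by
  conv_lhs => rw [split_at_indexOf ha]
  rw [List.filter_append, List.filter_cons_of_pos honl]

/-- A release of `l` is preceded by the matching acquire; conversely
`matchRel` of an acquire is determined by the lock projection. -/
theorem matchRel_eq_next {σ : Trace} {a r l : ℕ} (hn : σ.Nodup) (ha : a ∈ σ)
    {X Y : Trace} (hsplit : σ.filter (onLock ev l) = X ++ a :: r :: Y)
    (hop : (ev a).op = Op.acq l) (hr : (ev r).op = Op.rel l) :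
    matchRel ev σ a = some r := by
  have honl : onLock ev l a = true := (onLock_iff ev).2 (Or.inl hop)
  have hproj := proj_split ev hn ha honl
  have hnτ : (σ.filter (onLock ev l)).Nodup := (List.filter_sublist (l := σ)).nodup hn
  have huniq := split_unique hnτ hsplit hproj
  have hV : (σ.drop (σ.idxOf a + 1)).filter (onLock ev l) = r :: Y := huniq.2.symm
  rw [matchRel_of_split ev hn (split_at_indexOf ha) hop]
  have hfilter : (σ.drop (σ.idxOf a + 1)).filter (fun f => decide ((ev f).op = Op.rel l)) =
      ((σ.drop (σ.idxOf a + 1)).filter (onLock ev l)).filter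
        (fun f => decide ((ev f).op = Op.rel l)) := by
    rw [List.filter_filter]
    refine (List.filter_congr ?_).symm
    intro x hx
    by_cases hrx : (ev x).op = Op.rel l
    · simp [hrx, (onLock_iff ev).2 (Or.inr hrx)]
    · simp [hrx]
  rw [hfilter, hV, List.filter_cons_of_pos (by simpa using hr), List.head?_cons]

/-! ### Closure lemmas -/

theorem sigma_SPClosed {σ : Trace} : SPClosed ev σ {e : ℕ | e ∈ σ} := by
  refine ⟨⟨fun e he => he, ?_, ?_⟩, ?_⟩
  · intro f g h _
    obtain ⟨⟨hfσ, -, -⟩, -⟩ := h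
    exact hfσ
  · intro e _ f hf
    obtain ⟨x, -, -, hmem⟩ := lw_char ev hf
    exact (List.take_sublist _ _).subset hmem
  · intro a1 a2 l _ _ _ _ _ _ r hr
    obtain ⟨x, -, -, hmem⟩ := matchRel_char ev hr
    exact (List.drop_sublist _ _).subset hmem

theorem subset_SPClosure {σ : Trace} {S : Set ℕ} : S ⊆ SPClosure ev σ S := by
  intro s hs
  intro C hC
  exact hC.2 hs

theorem SPClosure_subset {σ : Trace} {S C : Set ℕ} (hC : SPClosed ev σ C) (hSC : S ⊆ C) :
    SPClosure ev σ S ⊆ C := fun x hx => hx C ⟨hC, hSC⟩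

theorem SPClosed_SPClosure {σ : Trace} {S : Set ℕ} (hS : ∀ s ∈ S, s ∈ σ) :
    SPClosed ev σ (SPClosure ev σ S) := by
  have hσmem : {e : ℕ | e ∈ σ} ∈ {C : Set ℕ | SPClosed ev σ C ∧ S ⊆ C} :=
    ⟨sigma_SPClosed ev, hS⟩
  refine ⟨⟨?_, ?_, ?_⟩, ?_⟩
  · intro e he
    exact he _ hσmem
  · intro f g h hg C hC
    exact hC.1.1.2.1 f g h (hg C hC)
  · intro e he f hf C hC
    exact hC.1.1.2.2 e (he C hC) f hf
  · intro a1 a2 l h1 h2 ho1 ho2 hord hne r hr C hC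
    exact hC.1.2 a1 a2 l (h1 C hC) (h2 C hC) ho1 ho2 hord hne r hr

/-! ### Forward direction: a sync-preserving reordering yields an SP-closed set -/

theorem alt_proj {σ : Trace} (hwf : WellFormed ev σ) (l : ℕ) :
    Alt ev l (σ.filter (onLock ev l)) :=
  alt_of_lockOkL ev _ (fun e he => (List.mem_filter.1 he).2)
    ((lockOkL_filter ev).1 ((lockOk_iff_forall ev).1 hwf.2 l))

theorem reordering_SPClosed {σ ρ : Trace} (hwf : WellFormed ev σ)
    (hcr : CorrectReordering ev σ ρ) (hsp : SyncPres ev σ ρ) :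
    SPClosed ev σ {e : ℕ | e ∈ ρ} := by
  have hρnd : ρ.Nodup := hcr.wf.1
  have hσnd : σ.Nodup := hwf.1
  constructor
  · refine ⟨fun e he => hcr.subset e he, ?_, ?_⟩
    · intro f g h hg
      exact (hcr.to_closed f g h hg).1
    · intro e he f hf
      obtain ⟨x, hex, hfx, hmem⟩ := lw_char ev hf
      have hlw : lw ev ρ e = some f := by rw [hcr.lw_eq e he ⟨x, hex⟩]; exact hf
      obtain ⟨x', -, -, hmem'⟩ := lw_char ev hlw
      exact (List.take_sublist _ _).subset hmem'
  · intro a1 a2 l ha1 ha2 ho1 ho2 hord hne r hmr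
    have ha1' : a1 ∈ ρ := ha1
    have ha2' : a2 ∈ ρ := ha2
    have hordρ : trord ρ a1 a2 := (hsp a1 a2 l ha1' ha2' ho1 ho2).2 hord
    have hlt : ρ.idxOf a1 < ρ.idxOf a2 :=
      lt_of_le_of_ne hordρ.2.2 (fun h => hne ((List.idxOf_inj ha1').1 h))
    set ρl := ρ.filter (onLock ev l) with hρldef
    have haρl : a1 ∈ ρl := List.mem_filter.2 ⟨ha1', (onLock_iff ev).2 (Or.inl ho1)⟩
    have ha2ρl : a2 ∈ ρl := List.mem_filter.2 ⟨ha2', (onLock_iff ev).2 (Or.inl ho2)⟩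
    have hρlnd : ρl.Nodup := (List.filter_sublist (l := ρ)).nodup hρnd
    have haltρ : Alt ev l ρl := alt_proj ev hcr.wf l
    have hltl : ρl.idxOf a1 < ρl.idxOf a2 :=
      sublist_indexOf_lt' (List.filter_sublist (l := ρ)) hρnd haρl ha2ρl hlt
    have hsplitρl := split_at_indexOf haρl
    have ha2drop : a2 ∈ ρl.drop (ρl.idxOf a1 + 1) :=
      (mem_drop_iff_nodup hρlnd).2 ⟨ha2ρl, by omega⟩
    obtain ⟨r1, Y', hY, hr1rel, hr1th⟩ := alt_pair_after_acq ev haltρ _ _ a1 hsplitρl ho1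
      (by intro h; rw [h] at ha2drop; simp at ha2drop)
    have hsplit2 : ρl = ρl.take (ρl.idxOf a1) ++ a1 :: r1 :: Y' := by
      conv_lhs => rw [hsplitρl]
      rw [hY]
    have hr1ρl : r1 ∈ ρl := by rw [hsplit2]; simp
    have hr1ρ : r1 ∈ ρ := List.mem_of_mem_filter hr1ρl
    have hr1σ : r1 ∈ σ := hcr.subset r1 hr1ρ
    have ha1σ : a1 ∈ σ := hord.1
    have hner : a1 ≠ r1 := by intro h; rw [h, hr1rel] at ho1; simp at ho1
    have hidxρl : ρl.idxOf r1 = ρl.idxOf a1 + 1 := indexOf_succ_of_split hρlnd hsplit2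
    have ha1ltr1 : σ.idxOf a1 < σ.idxOf r1 := by
      rcases lt_trichotomy (σ.idxOf a1) (σ.idxOf r1) with h | h | h
      · exact h
      · exact absurd ((List.idxOf_inj ha1σ).1 h) hner
      · exfalso
        have hto : threadOrd ev σ r1 a1 := ⟨⟨hr1σ, ha1σ, le_of_lt h⟩, hr1th⟩
        have hle : ρ.idxOf r1 ≤ ρ.idxOf a1 := ((hcr.to_closed r1 a1 hto ha1').2).1.2.2
        have : ρl.idxOf r1 ≤ ρl.idxOf a1 :=
          (sublist_indexOf_le_iff (List.filter_sublist (l := ρ)) hρnd hr1ρl haρl).2 hle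
        omega
    set τl := σ.filter (onLock ev l) with hτldef
    have haltσ : Alt ev l τl := alt_proj ev hwf l
    have hτnd : τl.Nodup := (List.filter_sublist (l := σ)).nodup hσnd
    have ha1τ : a1 ∈ τl := List.mem_filter.2 ⟨ha1σ, (onLock_iff ev).2 (Or.inl ho1)⟩
    have hr1τ : r1 ∈ τl := List.mem_filter.2 ⟨hr1σ, (onLock_iff ev).2 (Or.inr hr1rel)⟩
    have hlttl : τl.idxOf a1 < τl.idxOf r1 :=
      sublist_indexOf_lt' (List.filter_sublist (l := σ)) hσnd ha1τ hr1τ ha1ltr1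
    have hsplitτ := split_at_indexOf ha1τ
    have hr1drop : r1 ∈ τl.drop (τl.idxOf a1 + 1) :=
      (mem_drop_iff_nodup hτnd).2 ⟨hr1τ, by omega⟩
    obtain ⟨r0, Z', hZ, hr0rel, hr0th⟩ := alt_pair_after_acq ev haltσ _ _ a1 hsplitτ ho1
      (by intro h; rw [h] at hr1drop; simp at hr1drop)
    have hsplitτ2 : τl = τl.take (τl.idxOf a1) ++ a1 :: r0 :: Z' := by
      conv_lhs => rw [hsplitτ]
      rw [hZ]
    have hmr0 : matchRel ev σ a1 = some r0 := matchRel_eq_next ev hσnd ha1σ hsplitτ2 ho1 hr0rel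
    have hrr0 : r = r0 := Option.some.inj (hmr.symm.trans hmr0)
    subst hrr0
    have hrZtau : r ∈ τl := by conv_lhs => rw [hsplitτ2]
                               simp
    have hrZsig : r ∈ σ := List.mem_of_mem_filter hrZtau
    have hrZth' : (ev r).thread = (ev r1).thread := hr0th.trans hr1th.symm
    rcases eq_or_ne r r1 with rfl | hne01
    · exact hr1ρ
    · have hr1Z : r1 ∈ r :: Z' := by rw [← hZ]; exact hr1drop
      have hr1Z' : r1 ∈ Z' := by
        rcases List.mem_cons.1 hr1Z with h | h
        · exact absurd h.symm hne01
        · exact h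
      have hlt01 : τl.idxOf r < τl.idxOf r1 :=
        indexOf_lt_of_mem_tail hτnd
          (show τl = (τl.take (τl.idxOf a1) ++ [a1]) ++ r :: Z' by
            conv_lhs => rw [hsplitτ2]
            simp)
          hr1Z'
      have hle01 : σ.idxOf r ≤ σ.idxOf r1 :=
        le_of_lt (sublist_indexOf_lt (List.filter_sublist (l := σ)) hσnd hrZtau hr1τ hlt01)
      have hto : threadOrd ev σ r r1 := ⟨⟨hrZsig, hr1σ, hle01⟩, hrZth'⟩
      exact (hcr.to_closed r r1 hto hr1ρ).1

theorem race_to_ideal {σ : Trace} (hwf : WellFormed ev σ) {e1 e2 : ℕ}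
    (hr : SyncPresRace ev σ e1 e2) :
    e1 ∉ SPIdeal ev σ e1 e2 ∧ e2 ∉ SPIdeal ev σ e1 e2 := by
  obtain ⟨h1, h2, hc, ρ, hcr, hsp, hen1, hen2⟩ := hr
  have hS := reordering_SPClosed ev hwf hcr hsp
  have hgen : {f : ℕ | prevE ev σ e1 = some f ∨ prevE ev σ e2 = some f} ⊆ {e : ℕ | e ∈ ρ} := by
    rintro f (hf | hf)
    · obtain ⟨hmem, hth⟩ := prevE_char ev hf
      obtain ⟨hfσ, hflt⟩ := (mem_take_iff_nodup hwf.1).1 hmem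
      have hfne : f ≠ e1 := fun h => by rw [h] at hflt; omega
      exact hen1.2.2 f ⟨⟨hfσ, h1, le_of_lt hflt⟩, hth⟩ hfne
    · obtain ⟨hmem, hth⟩ := prevE_char ev hf
      obtain ⟨hfσ, hflt⟩ := (mem_take_iff_nodup hwf.1).1 hmem
      have hfne : f ≠ e2 := fun h => by rw [h] at hflt; omega
      exact hen2.2.2 f ⟨⟨hfσ, h2, le_of_lt hflt⟩, hth⟩ hfne
  have hsub : SPIdeal ev σ e1 e2 ⊆ {e : ℕ | e ∈ ρ} := SPClosure_subset ev hS hgen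
  exact ⟨fun h => hen1.2.1 (hsub h), fun h => hen2.2.1 (hsub h)⟩

/-! ### Backward direction: the SP-ideal linearizes to a sync-preserving reordering -/

theorem ideal_to_race {σ : Trace} (hwf : WellFormed ev σ) {e1 e2 : ℕ}
    (h1 : e1 ∈ σ) (h2 : e2 ∈ σ) (hc : Conflicting ev e1 e2)
    (hni1 : e1 ∉ SPIdeal ev σ e1 e2) (hni2 : e2 ∉ SPIdeal ev σ e1 e2) :
    SyncPresRace ev σ e1 e2 := by
  classical
  have hσnd : σ.Nodup := hwf.1
  set I : Set ℕ := SPIdeal ev σ e1 e2 with hIdef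
  set q : ℕ → Bool := fun e => decide (e ∈ I) with hqdef
  have hq : ∀ e, q e = true ↔ e ∈ I := fun e => by simp [hqdef]
  set ρ : Trace := σ.filter q with hρdef
  have hρsub : ρ <+ σ := List.filter_sublist (l := σ)
  have hρnd : ρ.Nodup := hρsub.nodup hσnd
  have hmemρ : ∀ e, e ∈ ρ ↔ e ∈ σ ∧ e ∈ I := by
    intro e; rw [hρdef, List.mem_filter, hq]
  have hgensub : {f : ℕ | prevE ev σ e1 = some f ∨ prevE ev σ e2 = some f} ⊆ {e : ℕ | e ∈ σ} := by
    rintro f (hf | hf)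
    · exact (List.take_sublist _ _).subset (prevE_char ev hf).1
    · exact (List.take_sublist _ _).subset (prevE_char ev hf).1
  have hIcl : SPClosed ev σ I := SPClosed_SPClosure ev hgensub
  have hImem : ∀ e ∈ I, e ∈ σ := hIcl.1.1
  have hgen : ∀ f, (prevE ev σ e1 = some f ∨ prevE ev σ e2 = some f) → f ∈ I :=
    fun f hf => subset_SPClosure ev hf
  have hTO : ∀ f g, threadOrd ev σ f g → g ∈ I → f ∈ I := hIcl.1.2.1
  -- lock semantics of the linearization
  have hlock : lockOk ev (fun _ => none) ρ := by
    rw [lockOk_iff_forall ev]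
    intro l
    rw [lockOkL_filter ev]
    have hcomm : ρ.filter (onLock ev l) = (σ.filter (onLock ev l)).filter q := by
      rw [hρdef, List.filter_filter, List.filter_filter]
      exact List.filter_congr (fun x _ => Bool.and_comm _ _)
    rw [hcomm]
    set τl := σ.filter (onLock ev l) with hτdef
    have hτnd : τl.Nodup := (List.filter_sublist (l := σ)).nodup hσnd
    have hτsub : τl <+ σ := List.filter_sublist (l := σ)
    have haltσ : Alt ev l τl := alt_proj ev hwf l
    refine lockOkL_of_alt ev (alt_filter ev haltσ q ?_ ?_)
    · -- releases pull in their acquires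
      intro X Y a r hs hacq hrel hqr
      obtain ⟨r', Y'', hY, hrel', hth⟩ :=
        alt_pair_after_acq ev haltσ X (r :: Y) a hs hacq (by simp)
      injection hY with hY1 hY2
      subst hY1
      have haτ : a ∈ τl := by rw [hs]; simp
      have hrτ : r ∈ τl := by rw [hs]; simp
      have haσ : a ∈ σ := hτsub.subset haτ
      have hrσ : r ∈ σ := hτsub.subset hrτ
      have hia : τl.idxOf a = X.length := indexOf_split hτnd hs
      have hir : τl.idxOf r = τl.idxOf a + 1 := indexOf_succ_of_split hτnd hs
      have hlt : σ.idxOf a < σ.idxOf r :=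
        sublist_indexOf_lt hτsub hσnd haτ hrτ (by omega)
      have haI : a ∈ I := hTO a r ⟨⟨haσ, hrσ, le_of_lt hlt⟩, hth.symm⟩ ((hq r).1 hqr)
      exact (hq a).2 haI
    · -- later acquires pull in earlier releases
      intro X Y a r hs hacq hrel hqa hex
      obtain ⟨a', ha'Y, ha'op, hqa'⟩ := hex
      have haτ : a ∈ τl := by rw [hs]; simp
      have ha'τ : a' ∈ τl := by rw [hs]; simp [ha'Y]
      have haσ : a ∈ σ := hτsub.subset haτ
      have ha'σ : a' ∈ σ := hτsub.subset ha'τ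
      have hia : τl.idxOf a = X.length := indexOf_split hτnd hs
      have hir : τl.idxOf r = τl.idxOf a + 1 := indexOf_succ_of_split hτnd hs
      have hia' : τl.idxOf r < τl.idxOf a' :=
        indexOf_lt_of_mem_tail hτnd (show τl = (X ++ [a]) ++ r :: Y by rw [hs]; simp) ha'Y
      have hlt : σ.idxOf a < σ.idxOf a' :=
        sublist_indexOf_lt hτsub hσnd haτ ha'τ (by omega)
      have hne : a ≠ a' := fun h => by rw [h] at hlt; omega
      have hmr : matchRel ev σ a = some r := matchRel_eq_next ev hσnd haσ hs hacq hrel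
      have hrI : r ∈ I := hIcl.2 a a' l ((hq a).1 hqa) ((hq a').1 hqa') hacq ha'op
        ⟨haσ, ha'σ, le_of_lt hlt⟩ hne r hmr
      exact (hq r).2 hrI
  -- the reordering is correct
  have hcr : CorrectReordering ev σ ρ := by
    refine ⟨⟨hρnd, hlock⟩, fun e he => hρsub.subset he, ?_, ?_⟩
    · intro f g h hg
      have hgI : g ∈ I := ((hmemρ g).1 hg).2
      by_cases hfg : f = g
      · subst hfg; exact ⟨hg, ⟨⟨hg, hg, le_refl _⟩, rfl⟩⟩
      · have hfI : f ∈ I := hTO f g h hgI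
        have hfρ : f ∈ ρ := (hmemρ f).2 ⟨h.1.1, hfI⟩
        exact ⟨hfρ, ⟨⟨hfρ, hg, (sublist_indexOf_le_iff hρsub hσnd hfρ hg).2 h.1.2.2⟩, h.2⟩⟩
    · intro e he hex
      obtain ⟨x, hop⟩ := hex
      have heσ : e ∈ σ := hρsub.subset he
      have heI : e ∈ I := ((hmemρ e).1 he).2
      have hqe : q e = true := (hq e).2 heI
      have hsplitρ : ρ = (σ.take (σ.idxOf e)).filter q ++
          e :: (σ.drop (σ.idxOf e + 1)).filter q := by
        rw [hρdef]
        conv_lhs => rw [split_at_indexOf heσ]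
        rw [List.filter_append, List.filter_cons_of_pos hqe]
      have htake : ρ.take (ρ.idxOf e) = (σ.take (σ.idxOf e)).filter q := by
        rw [indexOf_split hρnd hsplitρ]
        conv_lhs => rw [hsplitρ]
        exact List.take_left' rfl
      have hlwρ : lw ev ρ e =
          ((ρ.take (ρ.idxOf e)).filter fun f => decide ((ev f).op = Op.write x)).getLast? := by
        unfold lw; rw [hop]
      have hlwσ : lw ev σ e =
          ((σ.take (σ.idxOf e)).filter fun f => decide ((ev f).op = Op.write x)).getLast? := by
        unfold lw; rw [hop]
      rw [hlwρ, hlwσ, htake, List.filter_filter]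
      cases hlast : ((σ.take (σ.idxOf e)).filter fun f =>
          decide ((ev f).op = Op.write x)).getLast? with
      | none =>
        rw [List.getLast?_eq_none_iff] at hlast ⊢
        rw [List.filter_eq_nil_iff] at hlast ⊢
        intro b hb
        simp only [Bool.and_eq_true, not_and]
        intro hw
        exact absurd hw (hlast b hb)
      | some w =>
        have hwI : w ∈ I := hIcl.1.2.2 e heI w (by rw [hlwσ]; exact hlast)
        exact getLast?_filter_and hlast ((hq w).2 hwI)
  -- sync preservation
  have hsync : SyncPres ev σ ρ := by
    intro a1 a2 l hm1 hm2 _ _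
    constructor
    · rintro ⟨-, -, hle⟩
      exact ⟨hρsub.subset hm1, hρsub.subset hm2,
        (sublist_indexOf_le_iff hρsub hσnd hm1 hm2).1 hle⟩
    · rintro ⟨-, -, hle⟩
      exact ⟨hm1, hm2, (sublist_indexOf_le_iff hρsub hσnd hm1 hm2).2 hle⟩
  -- enabledness
  have enab : ∀ e, e ∈ σ → e ∉ I → (∀ f, prevE ev σ e = some f → f ∈ I) →
      Enabled ev σ ρ e := by
    intro e heσ heI hprev
    refine ⟨heσ, fun hmem => heI ((hmemρ e).1 hmem).2, ?_⟩
    intro f hfo hfne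
    have hfσ : f ∈ σ := hfo.1.1
    have hflt : σ.idxOf f < σ.idxOf e :=
      lt_of_le_of_ne hfo.1.2.2 (fun h => hfne ((List.idxOf_inj hfσ).1 h))
    set FT := (σ.take (σ.idxOf e)).filter
      (fun g => decide ((ev g).thread = (ev e).thread)) with hFT
    have hFTsub : FT <+ σ := (List.filter_sublist (l := _)).trans (List.take_sublist _ _)
    have hFTnd : FT.Nodup := hFTsub.nodup hσnd
    have hfFT : f ∈ FT := List.mem_filter.2
      ⟨(mem_take_iff_nodup hσnd).2 ⟨hfσ, hflt⟩, by simp [hfo.2]⟩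
    have hFTne : FT ≠ [] := fun h => by rw [h] at hfFT; simp at hfFT
    have hp : prevE ev σ e = some (FT.getLast hFTne) := by
      unfold prevE
      exact List.getLast?_eq_getLast hFTne
    set p := FT.getLast hFTne with hpdef
    have hpI : p ∈ I := hprev p hp
    have hpFT : p ∈ FT := List.getLast_mem hFTne
    have hpσ : p ∈ σ := hFTsub.subset hpFT
    obtain ⟨M, hM⟩ := getLast?_eq_some' (List.getLast?_eq_getLast hFTne)
    have hfp : σ.idxOf f ≤ σ.idxOf p := by
      rcases List.mem_append.1 (hM ▸ hfFT) with hfM | hf1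
      · have hidxp : FT.idxOf p = M.length :=
          indexOf_split hFTnd (by rw [hM])
        have hidxf : FT.idxOf f < M.length := by
          rw [hM, List.idxOf_append_of_mem hfM]
          exact List.idxOf_lt_length_iff.2 hfM
        exact le_of_lt (sublist_indexOf_lt hFTsub hσnd hfFT hpFT (by omega))
      · have : f = p := by simpa using hf1
        rw [this]
    have hpth : (ev p).thread = (ev e).thread := (prevE_char ev hp).2
    have hto : threadOrd ev σ f p := ⟨⟨hfσ, hpσ, hfp⟩, hfo.2.trans hpth.symm⟩
    have hfI : f ∈ I := hTO f p hto hpI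
    exact (hmemρ f).2 ⟨hfσ, hfI⟩
  exact ⟨h1, h2, hc, ρ, hcr, hsync,
    enab e1 h1 hni1 (fun f hf => hgen f (Or.inl hf)),
    enab e2 h2 hni2 (fun f hf => hgen f (Or.inr hf))⟩

end Race

open Race in
/-- a conflicting pair `(e1, e2)` of a well-formed trace `σ`
(with `e1` strictly before `e2`) is a sync-preserving race iff
`SPIdeal σ (e1, e2)` contains neither `e1` nor `e2`. -/
theorem syncpres_race_iff_spideal (ev : ℕ → EventData) (σ : Trace)
    (hwf : WellFormed ev σ) (e1 e2 : ℕ) (h1 : e1 ∈ σ) (h2 : e2 ∈ σ)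
    (hc : Conflicting ev e1 e2) (hord : trord σ e1 e2) (hne : e1 ≠ e2) :
    SyncPresRace ev σ e1 e2 ↔
      (e1 ∉ SPIdeal ev σ e1 e2 ∧ e2 ∉ SPIdeal ev σ e1 e2) := by
  constructor
  · intro h
    exact Race.race_to_ideal ev hwf h
  · rintro ⟨hn1, hn2⟩
    exact Race.ideal_to_race ev hwf h1 h2 hc hn1 hn2
end

section
/- Let σ be a well-formed trace, let e ∈ E_σ, and let σ' be a sync-preserving correct reordering of σ in which e is enabled. Then SPClosureσ({prevσ(e)} \ {⊥}) ⊆ E_σ'. -/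
namespace Race

lemma indexOf_lt_of_mem_take {l : List ℕ} {n : ℕ} {x : ℕ} (h : x ∈ l.take n) :
    l.idxOf x < n := by
  induction l generalizing n with
  | nil => simp at h
  | cons a t ih =>
    cases n with
    | zero => simp at h
    | succ m =>
      simp only [List.take_succ_cons, List.mem_cons] at h
      by_cases hx : x = a
      · subst hx; simp [List.idxOf_cons_self]
      · rcases h with rfl | h
        · exact absurd rfl hx
        · rw [List.idxOf_cons_ne _ (Ne.symm hx)]
          exact Nat.succ_lt_succ (ih h)

lemma indexOf_drop {l : List ℕ} (hnd : l.Nodup) {n x : ℕ} (h : x ∈ l.drop n) :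
    l.idxOf x = n + (l.drop n).idxOf x := by
  induction l generalizing n with
  | nil => simp at h
  | cons a t ih =>
    cases n with
    | zero => simp
    | succ m =>
      simp only [List.drop_succ_cons] at h ⊢
      have hxt : x ∈ t := List.mem_of_mem_drop h
      have hxa : x ≠ a := by rintro rfl; exact (List.nodup_cons.mp hnd).1 hxt
      rw [List.idxOf_cons_ne _ (Ne.symm hxa), ih (List.nodup_cons.mp hnd).2 h]
      omega

lemma indexOf_head_filter_le {l : List ℕ} {P : ℕ → Bool} {r r' : ℕ}
    (h : (l.filter P).head? = some r) (h' : r' ∈ l) (hp : P r' = true) :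
    l.idxOf r ≤ l.idxOf r' := by
  induction l with
  | nil => simp at h'
  | cons a t ih =>
    by_cases ha : P a = true
    · have hra : r = a := by
        have := h; rw [List.filter_cons, if_pos ha] at this
        exact (Option.some_inj.mp (by simpa using this)).symm
      simp [hra, List.idxOf_cons_self]
    · have ha' : P a = false := by simpa using ha
      have ht : (t.filter P).head? = some r := by
        rw [List.filter_cons, if_neg (by simp [ha'])] at h; exact h
      have hr : r ∈ t.filter P := List.mem_of_mem_head? (by simp [ht])
      have hrP : P r = true := (List.mem_filter.mp hr).2
      have hra : r ≠ a := by rintro rfl; rw [hrP] at ha';simp at ha'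
      have hr'a : r' ≠ a := by rintro rfl; rw [hp] at ha'; simp at ha'
      rcases List.mem_cons.mp h' with rfl | h'
      · exact absurd rfl hr'a
      · rw [List.idxOf_cons_ne _ (Ne.symm hra), List.idxOf_cons_ne _ (Ne.symm hr'a)]
        exact Nat.succ_le_succ (ih ht h')

lemma mem_of_head_filter {l : List ℕ} {P : ℕ → Bool} {r : ℕ}
    (h : (l.filter P).head? = some r) : r ∈ l ∧ P r = true := by
  have hr : r ∈ l.filter P := List.mem_of_mem_head? (by simp [h])
  exact ⟨(List.mem_filter.mp hr).1, (List.mem_filter.mp hr).2⟩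

end Race
namespace Race

lemma lockOk_append (ev : ℕ → EventData) :
    ∀ (u w : Trace) (h : ℕ → Option ℕ), lockOk ev h (u ++ w) → ∃ h', lockOk ev h' w := by
  intro u
  induction u with
  | nil => intro w h hl; exact ⟨h, hl⟩
  | cons e u ih =>
    intro w h hl
    rw [List.cons_append] at hl
    cases hop : (ev e).op with
    | acq l => simp only [lockOk, hop] at hl; exact ih w _ hl.2
    | rel l => simp only [lockOk, hop] at hl; exact ih w _ hl.2
    | read x => simp only [lockOk, hop] at hl; exact ih w _ hl
    | write x => simp only [lockOk, hop] at hl; exact ih w _ hl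

lemma exists_rel_of_acq (ev : ℕ → EventData) :
    ∀ (τ : Trace) (h : ℕ → Option ℕ) (l t : ℕ), lockOk ev h τ → h l = some t →
    (∃ a ∈ τ, (ev a).op = Op.acq l) →
    ∃ r' ∈ τ, (ev r').op = Op.rel l ∧ (ev r').thread = t := by
  intro τ
  induction τ with
  | nil => rintro h l t _ _ ⟨a, ha, _⟩; simp at ha
  | cons e rest ih =>
    rintro h l t hok hl ⟨a, ha, hac⟩
    cases hop : (ev e).op with
    | acq l' =>
      simp only [lockOk, hop] at hok
      by_cases hll : l' = l
      · subst hll; rw [hok.1] at hl; simp at hl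
      · have hae : a ≠ e := by rintro rfl; rw [hop] at hac; injection hac with h; exact hll h
        have ha' : a ∈ rest := by rcases List.mem_cons.mp ha with rfl | h; exact absurd rfl hae; exact h
        obtain ⟨r', hr', ho, ht⟩ := ih _ l t hok.2
          (by rw [Function.update_of_ne (Ne.symm hll)]; exact hl) ⟨a, ha', hac⟩
        exact ⟨r', List.mem_cons_of_mem _ hr', ho, ht⟩
    | rel l' =>
      simp only [lockOk, hop] at hok
      by_cases hll : l' = l
      · subst hll
        refine ⟨e, List.mem_cons_self, hop, ?_⟩
        rw [hok.1] at hl; exact Option.some_inj.mp hl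
      · have hae : a ≠ e := by rintro rfl; rw [hop] at hac; injection hac
        have ha' : a ∈ rest := by rcases List.mem_cons.mp ha with rfl | h; exact absurd rfl hae; exact h
        obtain ⟨r', hr', ho, ht⟩ := ih _ l t hok.2
          (by rw [Function.update_of_ne (Ne.symm hll)]; exact hl) ⟨a, ha', hac⟩
        exact ⟨r', List.mem_cons_of_mem _ hr', ho, ht⟩
    | read x =>
      simp only [lockOk, hop] at hok
      have hae : a ≠ e := by rintro rfl; rw [hop] at hac; injection hac
      have ha' : a ∈ rest := by rcases List.mem_cons.mp ha with rfl | h; exact absurd rfl hae; exact h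
      obtain ⟨r', hr', ho, ht⟩ := ih _ l t hok hl ⟨a, ha', hac⟩
      exact ⟨r', List.mem_cons_of_mem _ hr', ho, ht⟩
    | write x =>
      simp only [lockOk, hop] at hok
      have hae : a ≠ e := by rintro rfl; rw [hop] at hac; injection hac
      have ha' : a ∈ rest := by rcases List.mem_cons.mp ha with rfl | h; exact absurd rfl hae; exact h
      obtain ⟨r', hr', ho, ht⟩ := ih _ l t hok hl ⟨a, ha', hac⟩
      exact ⟨r', List.mem_cons_of_mem _ hr', ho, ht⟩

lemma thread_of_first_rel (ev : ℕ → EventData) :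
    ∀ (τ : Trace) (h : ℕ → Option ℕ) (l t r : ℕ), lockOk ev h τ → h l = some t →
    ((τ.filter fun f => decide ((ev f).op = Op.rel l)).head? = some r) →
    (ev r).thread = t := by
  intro τ
  induction τ with
  | nil => intro h l t r _ _ hr; simp at hr
  | cons e rest ih =>
    intro h l t r hok hl hr
    cases hop : (ev e).op with
    | acq l' =>
      simp only [lockOk, hop] at hok
      by_cases hll : l' = l
      · subst hll; rw [hok.1] at hl; simp at hl
      · have : (ev e).op ≠ Op.rel l := by rw [hop]; intro h; injection h
        rw [List.filter_cons, if_neg (by simpa using this)] at hr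
        exact ih _ l t r hok.2 (by rw [Function.update_of_ne (Ne.symm hll)]; exact hl) hr
    | rel l' =>
      simp only [lockOk, hop] at hok
      by_cases hll : l' = l
      · subst hll
        rw [List.filter_cons, if_pos (by simp [hop])] at hr
        have : r = e := by simpa using hr.symm
        subst this
        rw [hok.1] at hl; exact Option.some_inj.mp hl
      · have : (ev e).op ≠ Op.rel l := by rw [hop]; intro h; injection h with h; exact hll h
        rw [List.filter_cons, if_neg (by simpa using this)] at hr
        exact ih _ l t r hok.2 (by rw [Function.update_of_ne (Ne.symm hll)]; exact hl) hr
    | read x =>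
      simp only [lockOk, hop] at hok
      have : (ev e).op ≠ Op.rel l := by rw [hop]; intro h; injection h
      rw [List.filter_cons, if_neg (by simpa using this)] at hr
      exact ih _ l t r hok hl hr
    | write x =>
      simp only [lockOk, hop] at hok
      have : (ev e).op ≠ Op.rel l := by rw [hop]; intro h; injection h
      rw [List.filter_cons, if_neg (by simpa using this)] at hr
      exact ih _ l t r hok hl hr

lemma lockOk_suffix_acq (ev : ℕ → EventData) {σ : Trace}
    (hwf : lockOk ev (fun _ => none) σ)
    {a l : ℕ} (ha : a ∈ σ) (hop : (ev a).op = Op.acq l) :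
    ∃ h', lockOk ev h' (σ.drop (σ.idxOf a + 1)) ∧ h' l = some ((ev a).thread) := by
  have hlt : σ.idxOf a < σ.length := List.idxOf_lt_length_iff.mpr ha
  have hdec : σ = σ.take (σ.idxOf a) ++ (a :: σ.drop (σ.idxOf a + 1)) := by
    conv_lhs => rw [← List.take_append_drop (σ.idxOf a) σ]
    rw [List.drop_eq_getElem_cons hlt, List.getElem_idxOf hlt]
  rw [hdec] at hwf
  obtain ⟨h', hok⟩ := lockOk_append ev _ _ _ hwf
  simp only [lockOk, hop] at hok
  exact ⟨_, hok.2, Function.update_self _ _ _⟩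

end Race
open Race in
/-- if `e` is enabled in a sync-preserving correct reordering
`ρ` of a well-formed trace `σ`, then `SPClosure σ ({prev σ e} \ {⊥})` is
contained in the events of `ρ`. -/
theorem spclosure_subset_of_enabled (ev : ℕ → EventData) (σ ρ : Trace)
    (hwf : WellFormed ev σ) (e : ℕ) (he : e ∈ σ)
    (hcr : CorrectReordering ev σ ρ) (hsp : SyncPres ev σ ρ)
    (hen : Enabled ev σ ρ e) :
    SPClosure ev σ {f : ℕ | prevE ev σ e = some f} ⊆ {f : ℕ | f ∈ ρ} := by
  have hndσ := hwf.1
  have hndρ := hcr.wf.1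
  apply Set.sInter_subset_of_mem
  refine ⟨⟨⟨fun f hf => hcr.subset f hf,
      fun e1 e2 hto h2 => (hcr.to_closed e1 e2 hto h2).1, ?_⟩, ?_⟩, ?_⟩
  · -- lw-closedness of ρ
    intro f hf g hg
    cases hop : (ev f).op with
    | read x =>
      have hlwρ : lw ev ρ f = some g := by
        rw [hcr.lw_eq f hf ⟨x, hop⟩]; exact hg
      simp only [lw, hop] at hlwρ
      have hmem : g ∈ (ρ.take (ρ.idxOf f)).filter fun y => decide ((ev y).op = Op.write x) :=
        List.mem_of_mem_getLast? (by simp [hlwρ])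
      exact List.mem_of_mem_take (List.mem_filter.mp hmem).1
    | write x => simp [lw, hop] at hg
    | acq l => simp [lw, hop] at hg
    | rel l => simp [lw, hop] at hg
  · -- sync-preserving closedness of ρ
    intro a1 a2 l ha1 ha2 hop1 hop2 htr hne r hr
    have ha1ρ : a1 ∈ ρ := ha1
    have ha2ρ : a2 ∈ ρ := ha2
    have ha1σ : a1 ∈ σ := htr.1
    have ha2σ : a2 ∈ σ := htr.2.1
    have htrρ : trord ρ a1 a2 := (hsp a1 a2 l ha1ρ ha2ρ hop1 hop2).mpr htr
    have hneidx : ρ.idxOf a1 < ρ.idxOf a2 := by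
      have hle := htrρ.2.2
      rcases lt_or_eq_of_le hle with h | h
      · exact h
      · exact absurd ((List.idxOf_inj ha1ρ).mp h) hne
    have ha2drop : a2 ∈ ρ.drop (ρ.idxOf a1 + 1) := by
      have := List.take_append_drop (ρ.idxOf a1 + 1) ρ
      rcases List.mem_append.mp (by rw [this]; exact ha2ρ) with h | h
      · have := indexOf_lt_of_mem_take h; omega
      · exact h
    obtain ⟨h', hok', hl'⟩ := lockOk_suffix_acq ev hcr.wf.2 ha1ρ hop1
    obtain ⟨r', hr'mem, hr'op, hr'th⟩ :=
      exists_rel_of_acq ev _ h' l (ev a1).thread hok' hl' ⟨a2, ha2drop, hop2⟩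
    obtain ⟨hσ', hokσ', hlσ'⟩ := lockOk_suffix_acq ev hwf.2 ha1σ hop1
    have hrhead : ((σ.drop (σ.idxOf a1 + 1)).filter
        fun f => decide ((ev f).op = Op.rel l)).head? = some r := by
      simpa [matchRel, hop1] using hr
    have hrth : (ev r).thread = (ev a1).thread :=
      thread_of_first_rel ev _ _ l _ r hokσ' hlσ' hrhead
    have hrmem : r ∈ σ.drop (σ.idxOf a1 + 1) := (mem_of_head_filter hrhead).1
    have hrσ : r ∈ σ := List.mem_of_mem_drop hrmem
    have hr'ρ : r' ∈ ρ := List.mem_of_mem_drop hr'mem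
    have hr'σ : r' ∈ σ := hcr.subset r' hr'ρ
    have hr'ne : r' ≠ a1 := by rintro rfl; rw [hop1] at hr'op; injection hr'op
    have hidxρ : ρ.idxOf a1 < ρ.idxOf r' := by
      have := indexOf_drop hndρ hr'mem; omega
    have haσr' : σ.idxOf a1 ≤ σ.idxOf r' := by
      by_contra hlt; push_neg at hlt
      have hto : threadOrd ev σ r' a1 := ⟨⟨hr'σ, ha1σ, le_of_lt hlt⟩, hr'th⟩
      have := (hcr.to_closed r' a1 hto ha1ρ).2.1.2.2
      omega
    have hr'dropσ : r' ∈ σ.drop (σ.idxOf a1 + 1) := by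
      have hlt : σ.idxOf a1 < σ.idxOf r' := by
        rcases lt_or_eq_of_le haσr' with h | h
        · exact h
        · exact absurd ((List.idxOf_inj ha1σ).mp h).symm hr'ne
      have := List.take_append_drop (σ.idxOf a1 + 1) σ
      rcases List.mem_append.mp (by rw [this]; exact hr'σ) with h | h
      · have := indexOf_lt_of_mem_take h; omega
      · exact h
    have hled : (σ.drop (σ.idxOf a1 + 1)).idxOf r ≤
        (σ.drop (σ.idxOf a1 + 1)).idxOf r' :=
      indexOf_head_filter_le hrhead hr'dropσ (by simp [hr'op])
    have hleσ : σ.idxOf r ≤ σ.idxOf r' := by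
      rw [indexOf_drop hndσ hrmem, indexOf_drop hndσ hr'dropσ]; omega
    have hto : threadOrd ev σ r r' := ⟨⟨hrσ, hr'σ, hleσ⟩, by rw [hrth, hr'th]⟩
    exact (hcr.to_closed r r' hto hr'ρ).1
  · -- base case: prev event is in ρ
    intro f hf
    have hf' : prevE ev σ e = some f := hf
    simp only [prevE] at hf'
    have hmem : f ∈ (σ.take (σ.idxOf e)).filter
        fun g => decide ((ev g).thread = (ev e).thread) :=
      List.mem_of_mem_getLast? (by simp [hf'])
    have hth : (ev f).thread = (ev e).thread := by
      have := (List.mem_filter.mp hmem).2; simpa using this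
    have htake := (List.mem_filter.mp hmem).1
    have hfσ : f ∈ σ := List.mem_of_mem_take htake
    have hlt : σ.idxOf f < σ.idxOf e := indexOf_lt_of_mem_take htake
    have hfe : f ≠ e := by rintro rfl; omega
    exact hen.2.2 f ⟨⟨hfσ, he, le_of_lt hlt⟩, hth⟩ hfe
end

section
/- Let σ be a well-formed trace and let ρ = σ[i:j] be a contiguous subtrace of σ. If for every release event e in ρ the matching acquire matchσ(e) also lies in ρ, then ρ is itself a well-formed trace. -/
namespace Race

variable (ev : ℕ → EventData)

-- AUX
def step (h : ℕ → Option ℕ) (e : ℕ) : ℕ → Option ℕ :=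
  match (ev e).op with
  | Op.acq l => Function.update h l (some (ev e).thread)
  | Op.rel l => Function.update h l none
  | _ => h

def runT (h : ℕ → Option ℕ) : Trace → (ℕ → Option ℕ)
  | [] => h
  | e :: rest => runT (step ev h e) rest

lemma lockOk_cons (h : ℕ → Option ℕ) (e : ℕ) (rest : Trace) :
    lockOk ev h (e :: rest) ↔
      (match (ev e).op with
       | Op.acq l => h l = none
       | Op.rel l => h l = some (ev e).thread
       | _ => True) ∧ lockOk ev (step ev h e) rest := by
  cases hop : (ev e).op <;> simp [lockOk, step, hop]

lemma lockOk_append_s15 (a b : Trace) (h : ℕ → Option ℕ) :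
    lockOk ev h (a ++ b) ↔ lockOk ev h a ∧ lockOk ev (runT ev h a) b := by
  induction a generalizing h with
  | nil => simp [lockOk, runT]
  | cons e rest ih =>
    simp only [List.cons_append, lockOk_cons, runT, ih, and_assoc]

lemma indexOf_lt_of_mem_take_s15 {σ : Trace} {a : ℕ} {n : ℕ} (h : a ∈ σ.take n) :
    σ.idxOf a < n := by
  induction σ generalizing n with
  | nil => simp at h
  | cons b rest ih =>
    cases n with
    | zero => simp at h
    | succ n =>
      simp only [List.take_succ_cons, List.mem_cons] at h
      by_cases hab : a = b
      · simp [hab, List.idxOf_cons_self]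
      · rcases h with h | h
        · exact absurd h hab
        · rw [List.idxOf_cons_ne _ (Ne.symm hab)]
          exact Nat.succ_lt_succ (ih h)

lemma head_filter_min {p : ℕ → Bool} {ρ : Trace} {e a : ℕ}
    (hh : (ρ.filter p).head? = some e) (ha : a ∈ ρ) (hpa : p a = true) :
    ρ.idxOf e ≤ ρ.idxOf a := by
  induction ρ with
  | nil => simp at ha
  | cons b rest ih =>
    by_cases hpb : p b = true
    · simp [List.filter_cons, hpb] at hh
      subst hh
      simp [List.idxOf_cons_self]
    · have hab : a ≠ b := fun h => hpb (h ▸ hpa)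
      rw [List.mem_cons] at ha
      simp only [List.filter_cons, Bool.eq_false_iff.mpr hpb, cond_false,
        Bool.false_eq_true, if_false] at hh
      have hef : e ∈ rest.filter p := List.mem_of_mem_head? (Option.mem_def.mpr hh)
      have heb : e ≠ b := fun h => hpb (h ▸ List.of_mem_filter hef)
      rcases ha with rfl | ha
      · exact absurd hpa hpb
      · rw [List.idxOf_cons_ne _ (Ne.symm heb), List.idxOf_cons_ne _ (Ne.symm hab)]
        exact Nat.succ_le_succ (ih hh ha)
def lockP (l : ℕ) (f : ℕ) : Bool :=
  decide ((ev f).op = Op.acq l) || decide ((ev f).op = Op.rel l)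

lemma lockOk_weaken : ∀ (ρ : Trace) (h h' : ℕ → Option ℕ),
    lockOk ev h ρ →
    (∀ l : ℕ, h' l = h l ∨ (h' l = none ∧
      ∀ x : ℕ, (ev x).op = Op.rel l → (ρ.filter (lockP ev l)).head? ≠ some x)) →
    lockOk ev h' ρ := by
  intro ρ
  induction ρ with
  | nil => intro h h' _ _; simp [lockOk]
  | cons e rest ih =>
    intro h h' hok hc
    rw [lockOk_cons] at hok ⊢
    cases hop : (ev e).op with
    | acq l0 =>
      simp only [hop] at hok ⊢
      obtain ⟨hnone, hrest⟩ := hok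
      constructor
      · rcases hc l0 with hl | ⟨hl, _⟩
        · rw [hl, hnone]
        · exact hl
      · simp only [step, hop] at hrest ⊢
        apply ih _ _ hrest
        intro l
        by_cases hll : l = l0
        · subst hll; left; simp [Function.update]
        · rcases hc l with hl | ⟨hl, hhead⟩
          · left; simp [Function.update, hll, hl]
          · right
            refine ⟨by simp [Function.update, hll, hl], ?_⟩
            have hpe : lockP ev l e = false := by
              simp [lockP, hop, hll, Ne.symm hll]
            intro x hx
            have := hhead x hx
            simpa [List.filter_cons, hpe] using this
    | rel l0 =>
      simp only [hop] at hok ⊢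
      obtain ⟨hsome, hrest⟩ := hok
      constructor
      · rcases hc l0 with hl | ⟨hl, hhead⟩
        · rw [hl, hsome]
        · exfalso
          have hpe : lockP ev l0 e = true := by simp [lockP, hop]
          exact hhead e hop (by simp [List.filter_cons, hpe])
      · simp only [step, hop] at hrest ⊢
        apply ih _ _ hrest
        intro l
        by_cases hll : l = l0
        · subst hll; left; simp [Function.update]
        · rcases hc l with hl | ⟨hl, hhead⟩
          · left; simp [Function.update, hll, hl]
          · right
            refine ⟨by simp [Function.update, hll, hl], ?_⟩
            have hpe : lockP ev l e = false := by
              simp [lockP, hop, hll, Ne.symm hll]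
            intro x hx
            have := hhead x hx
            simpa [List.filter_cons, hpe] using this
    | read y =>
      simp only [hop] at hok ⊢
      refine ⟨trivial, ?_⟩
      simp only [step, hop] at hok ⊢
      apply ih _ _ hok.2
      intro l
      rcases hc l with hl | ⟨hl, hhead⟩
      · left; exact hl
      · right
        refine ⟨hl, ?_⟩
        have hpe : lockP ev l e = false := by simp [lockP, hop]
        intro x hx
        have := hhead x hx
        simpa [List.filter_cons, hpe] using this
    | write y =>
      simp only [hop] at hok ⊢
      refine ⟨trivial, ?_⟩
      simp only [step, hop] at hok ⊢
      apply ih _ _ hok.2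
      intro l
      rcases hc l with hl | ⟨hl, hhead⟩
      · left; exact hl
      · right
        refine ⟨hl, ?_⟩
        have hpe : lockP ev l e = false := by simp [lockP, hop]
        intro x hx
        have := hhead x hx
        simpa [List.filter_cons, hpe] using this

end Race

open Race in
/-- a contiguous subtrace `ρ` of a well-formed trace `σ` in
which every release event has its matching acquire inside `ρ` is itself a
well-formed trace. -/
theorem subtrace_wellformed (ev : ℕ → EventData) (σ ρ pre suf : Trace)
    (hwf : WellFormed ev σ) (hsub : σ = pre ++ ρ ++ suf)
    (hmatch : ∀ e ∈ ρ, ∀ l : ℕ, (ev e).op = Op.rel l →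
      ∃ a : ℕ, matchAcq ev σ e = some a ∧ a ∈ ρ) :
    WellFormed ev ρ := by
  have hnd : ρ.Nodup :=
    ((List.sublist_append_left ρ suf).trans
      (List.sublist_append_right pre (ρ ++ suf))).nodup
      (by rw [← List.append_assoc, ← hsub]; exact hwf.1)
  have key : ∀ y ∈ ρ, σ.idxOf y = pre.length + ρ.idxOf y := by
    intro y hy
    have hnp : y ∉ pre := by
      have h1 := hwf.1
      rw [hsub, List.append_assoc, List.nodup_append] at h1
      intro hc
      exact h1.2.2 y hc y (List.mem_append_left _ hy) rfl
    rw [hsub, List.append_assoc, List.idxOf_append_of_notMem hnp,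
      List.idxOf_append_of_mem hy]
  have hlok : lockOk ev (runT ev (fun _ => none) pre) ρ := by
    have h2 := hwf.2
    rw [hsub, List.append_assoc, lockOk_append_s15] at h2
    exact ((lockOk_append_s15 ev ρ suf _).mp h2.2).1
  refine ⟨hnd, lockOk_weaken ev ρ _ _ hlok ?_⟩
  intro l
  right
  refine ⟨rfl, ?_⟩
  intro x hx hhead
  have hxmem : x ∈ ρ :=
    List.mem_of_mem_filter (List.mem_of_mem_head? (Option.mem_def.mpr hhead))
  obtain ⟨a, hma, haρ⟩ := hmatch x hxmem l hx
  rw [matchAcq, hx] at hma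
  have hamem : a ∈ (σ.take (σ.idxOf x)).filter
      (fun f => decide ((ev f).op = Op.acq l)) := by
    obtain ⟨h1, h2⟩ := List.mem_getLast?_eq_getLast (Option.mem_def.mpr hma)
    rw [h2]; exact List.getLast_mem h1
  have hopa : (ev a).op = Op.acq l := by
    have := List.of_mem_filter hamem; simpa using this
  have hlt : σ.idxOf a < σ.idxOf x :=
    indexOf_lt_of_mem_take_s15 (List.mem_of_mem_filter hamem)
  have hle : ρ.idxOf x ≤ ρ.idxOf a :=
    head_filter_min hhead haρ (by simp [lockP, hopa])
  rw [key x hxmem, key a haρ] at hlt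
  omega
end
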